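/- Under the same hypotheses, √(μ(M)) · f(M) → 0 as M → ∞. -/

import Mathlib

open MeasureTheory Set Filter

theorem stmt_3 (f F μ : ℝ → ℝ)
    (hcont : ContinuousOn f (Ici 0))
    (hpos : ∀ s, 0 ≤ s → 0 < f s)
    (hanti : StrictAntiOn f (Ici 0))
    (hint : IntegrableOn f (Ici 0))
    (hone : (∫ s in Ioi (0:ℝ), f s) = 1)
    (hF : ∀ s, F s = ∫ σ in Ioi s, f σ)
    (hμnonneg : ∀ M, 0 < M → 0 ≤ μ M)
    (hμ : ∀ M, 0 < M →
      Real.sqrt (μ M) = (Real.sqrt 2 / 2) * ∫ s in (0:ℝ)..M, (F s - F M) ^ (-(1/2) : ℝ)) :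
    Tendsto (fun M => Real.sqrt (μ M) * f M) atTop (nhds 0) := by
  have hfnn : ∀ s, 0 ≤ s → 0 ≤ f s := fun s hs => (hpos s hs).le
  -- splitting the tail integral
  have hsplit : ∀ s M : ℝ, 0 ≤ s → s ≤ M → F s - F M = ∫ t in Ioc s M, f t := by
    intro s M hs hsM
    have h1 : IntegrableOn f (Ioi s) := hint.mono_set (Ioi_subset_Ici hs)
    have h2 : Ioi s = Ioc s M ∪ Ioi M := (Ioc_union_Ioi_eq_Ioi hsM).symm
    rw [hF s, hF M, h2, setIntegral_union (Ioc_disjoint_Ioi le_rfl) measurableSet_Ioi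
      (h1.mono_set (by rw [h2]; exact subset_union_left))
      (h1.mono_set (by rw [h2]; exact subset_union_right))]
    ring
  -- lower bound via monotonicity of f
  have hlow : ∀ s M : ℝ, 0 ≤ s → s ≤ M → f M * (M - s) ≤ F s - F M := by
    intro s M hs hsM
    rw [hsplit s M hs hsM]
    have hM0 : (0:ℝ) ≤ M := hs.trans hsM
    have h := setIntegral_ge_of_const_le (c := f M) measurableSet_Ioc
      (by simp [Real.volume_Ioc])
      (fun x hx => hanti.antitoneOn (mem_Ici.2 (hs.trans hx.1.le)) (mem_Ici.2 hM0) hx.2)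
      (hint.mono_set (fun x hx => mem_Ici.2 (hs.trans hx.1.le)))
    simpa [Real.volume_Ioc, ENNReal.toReal_ofReal (sub_nonneg.2 hsM), max_eq_left (sub_nonneg.2 hsM), mul_comm] using h
  have hFnn : ∀ M : ℝ, 0 ≤ M → 0 ≤ F M := by
    intro M hM
    rw [hF M]
    exact setIntegral_nonneg measurableSet_Ioi fun x hx => hfnn x (hM.trans (le_of_lt hx))
  -- the tail tends to zero
  have htail : Tendsto F atTop (nhds 0) := by
    have hIoi0 : IntegrableOn f (Ioi 0) := hint.mono_set Ioi_subset_Ici_self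
    have h1 : Tendsto (fun M => ∫ s in (0:ℝ)..M, f s) atTop (nhds 1) := by
      rw [← hone]
      exact intervalIntegral_tendsto_integral_Ioi 0 hIoi0 tendsto_id
    have h2 : Tendsto (fun M => 1 - ∫ s in (0:ℝ)..M, f s) atTop (nhds 0) := by
      simpa using h1.const_sub 1
    refine h2.congr' ?_
    filter_upwards [eventually_ge_atTop (0:ℝ)] with M hM
    have hF0 : F 0 = 1 := by rw [hF]; exact hone
    rw [intervalIntegral.integral_of_le hM, ← hsplit 0 M le_rfl hM, hF0]
    ring
  -- the key bound
  have key : ∀ M : ℝ, 0 < M →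
      Real.sqrt (μ M) * f M ≤ Real.sqrt 2 * Real.sqrt (2 * F (M / 2)) := by
    intro M hM
    have hfM : 0 < f M := hpos M hM.le
    -- integrability of the comparison function
    have h0 : IntervalIntegrable (fun x : ℝ => x ^ (-(1/2):ℝ)) volume 0 M :=
      intervalIntegral.intervalIntegrable_rpow' (by norm_num)
    have hRint : IntervalIntegrable
        (fun s => (f M) ^ (-(1/2):ℝ) * (M - s) ^ (-(1/2):ℝ)) volume 0 M := by
      have := ((h0.comp_sub_left M).const_mul ((f M) ^ (-(1/2):ℝ))).symm
      simpa using this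
    -- pointwise comparison on Ioc 0 M
    have hmono : (∫ s in (0:ℝ)..M, (F s - F M) ^ (-(1/2):ℝ)) ≤
        ∫ s in (0:ℝ)..M, (f M) ^ (-(1/2):ℝ) * (M - s) ^ (-(1/2):ℝ) := by
      rw [intervalIntegral.integral_of_le hM.le, intervalIntegral.integral_of_le hM.le]
      apply integral_mono_of_nonneg
      · filter_upwards [ae_restrict_mem measurableSet_Ioc] with s hs
        have h1 : 0 ≤ F s - F M :=
          le_trans (mul_nonneg hfM.le (sub_nonneg.2 hs.2)) (hlow s M hs.1.le hs.2)
        exact Real.rpow_nonneg h1 _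
      · exact hRint.1
      · filter_upwards [ae_restrict_mem measurableSet_Ioc] with s hs
        rcases eq_or_lt_of_le hs.2 with h | h
        · rw [h]
          simp [Real.zero_rpow (by norm_num : (-(1/2):ℝ) ≠ 0)]
        · have h1 : 0 < f M * (M - s) := mul_pos hfM (by linarith)
          calc (F s - F M) ^ (-(1/2):ℝ)
              ≤ (f M * (M - s)) ^ (-(1/2):ℝ) :=
                Real.rpow_le_rpow_of_nonpos h1 (hlow s M hs.1.le hs.2) (by norm_num)
            _ = (f M) ^ (-(1/2):ℝ) * (M - s) ^ (-(1/2):ℝ) :=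
                Real.mul_rpow hfM.le (by linarith)
    -- computing the comparison integral
    have hcomp : (∫ s in (0:ℝ)..M, (f M) ^ (-(1/2):ℝ) * (M - s) ^ (-(1/2):ℝ)) =
        (f M) ^ (-(1/2):ℝ) * (2 * Real.sqrt M) := by
      rw [intervalIntegral.integral_const_mul]
      congr 1
      rw [intervalIntegral.integral_comp_sub_left (fun x => x ^ (-(1/2):ℝ)) M]
      simp only [sub_self, sub_zero]
      rw [integral_rpow (Or.inl (by norm_num))]
      rw [Real.zero_rpow (by norm_num : (-(1/2):ℝ) + 1 ≠ 0), Real.sqrt_eq_rpow]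
      norm_num
      ring
    -- assemble
    have hb1 : Real.sqrt (μ M) * f M ≤
        Real.sqrt 2 / 2 * ((f M) ^ (-(1/2):ℝ) * (2 * Real.sqrt M)) * f M := by
      rw [hμ M hM]
      have h2 : (0:ℝ) ≤ Real.sqrt 2 / 2 := by positivity
      exact mul_le_mul_of_nonneg_right
        (mul_le_mul_of_nonneg_left (hmono.trans_eq hcomp) h2) hfM.le
    have e1 : (f M) ^ (-(1/2):ℝ) * f M = Real.sqrt (f M) := by
      nth_rewrite 2 [← Real.rpow_one (f M)]
      rw [← Real.rpow_add hfM, Real.sqrt_eq_rpow]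
      norm_num
    have hb2 : Real.sqrt 2 / 2 * ((f M) ^ (-(1/2):ℝ) * (2 * Real.sqrt M)) * f M =
        Real.sqrt 2 * Real.sqrt (M * f M) := by
      rw [Real.sqrt_mul hM.le]
      calc Real.sqrt 2 / 2 * ((f M) ^ (-(1/2):ℝ) * (2 * Real.sqrt M)) * f M
          = Real.sqrt 2 * Real.sqrt M * ((f M) ^ (-(1/2):ℝ) * f M) := by ring
        _ = Real.sqrt 2 * (Real.sqrt M * Real.sqrt (f M)) := by rw [e1]; ring
    have hb3 : M * f M ≤ 2 * F (M / 2) := by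
      have h := hlow (M / 2) M (by positivity) (by linarith)
      have h2 := hFnn M hM.le
      nlinarith
    calc Real.sqrt (μ M) * f M ≤ Real.sqrt 2 * Real.sqrt (M * f M) := hb1.trans_eq hb2
      _ ≤ Real.sqrt 2 * Real.sqrt (2 * F (M / 2)) :=
          mul_le_mul_of_nonneg_left (Real.sqrt_le_sqrt hb3) (Real.sqrt_nonneg 2)
  -- squeeze
  have hg : Tendsto (fun M => Real.sqrt 2 * Real.sqrt (2 * F (M / 2))) atTop (nhds 0) := by
    have h1 : Tendsto (fun M : ℝ => M / 2) atTop atTop := by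
      apply tendsto_id.atTop_div_const
      norm_num
    have h2 : Tendsto (fun M => 2 * F (M / 2)) atTop (nhds 0) := by
      simpa using (htail.comp h1).const_mul (2:ℝ)
    have h3 : Tendsto (fun M => Real.sqrt (2 * F (M / 2))) atTop (nhds 0) := by
      have h4 := (Real.continuous_sqrt.tendsto 0).comp h2
      rw [Real.sqrt_zero] at h4
      exact h4
    simpa using h3.const_mul (Real.sqrt 2)
  apply squeeze_zero' (g := fun M => Real.sqrt 2 * Real.sqrt (2 * F (M / 2)))
  · filter_upwards [eventually_gt_atTop (0:ℝ)] with M hM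
    exact mul_nonneg (Real.sqrt_nonneg _) (hpos M hM.le).le
  · filter_upwards [eventually_gt_atTop (0:ℝ)] with M hM
    exact key M hM
  · exact hg
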